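/- For any graph family 𝓕 with exponential generating function F(z,w) = ∑ 𝓕_{n,m} w^m z^n/n! (𝓕_{n,m} = number of (n,m)-graphs in 𝓕), the number of (n,m)-graphs with one distinguished 𝓕-subgraph equals n!·[z^n w^m] F(z, w/(1+w)) e^z (1+w)^{C(n,2)}. -/

import Mathlib

open scoped BigOperators Classical
open PowerSeries

def IsGraph {n : ℕ} (G : Finset (Sym2 (Fin n))) (m : ℕ) : Prop :=
  G.card = m ∧ ∀ s ∈ G, ¬ s.IsDiag

def IsCopyOf {k n : ℕ} (H : SimpleGraph (Fin k)) (S : Finset (Fin n))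
    (E : Finset (Sym2 (Fin n))) : Prop :=
  ∃ φ : Fin k → Fin n, Function.Injective φ ∧
    Finset.image φ Finset.univ = S ∧ Sym2.map φ '' H.edgeSet = (E : Set (Sym2 (Fin n)))

/-- `𝓕_{k,ℓ}`: the number of graphs on `{1,…,k}` with `ℓ` edges belonging to the family. -/
noncomputable def famCount (𝓕 : (k : ℕ) → Set (SimpleGraph (Fin k))) (k l : ℕ) : ℕ :=
  Nat.card {G : SimpleGraph (Fin k) // G ∈ 𝓕 k ∧ G.edgeSet.ncard = l}

/-- The bivariate series `F(z, w/(1+w))`, given coefficientwise: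
`[z^k w^j] = ∑_{ℓ ≤ j} (𝓕_{k,ℓ}/k!) · [w^j] (w/(1+w))^ℓ`. -/
noncomputable def famEGFsub (𝓕 : (k : ℕ) → Set (SimpleGraph (Fin k))) :
    PowerSeries (PowerSeries ℚ) :=
  PowerSeries.mk fun k => PowerSeries.mk fun j =>
    ∑ l ∈ Finset.range (j + 1),
      ((famCount 𝓕 k l : ℚ) / Nat.factorial k) *
        PowerSeries.coeff (R := ℚ) j ((X * (1 + X)⁻¹ : PowerSeries ℚ) ^ l)

-- edgeSet of map
lemma edgeSet_map' {α β : Type*} (f : α ↪ β) (G : SimpleGraph α) :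
    (G.map f).edgeSet = Sym2.map f '' G.edgeSet := by
  ext e
  refine Sym2.ind (fun a b => ?_) e
  simp only [SimpleGraph.mem_edgeSet, SimpleGraph.map_adj, Set.mem_image]
  constructor
  · rintro ⟨u, v, h, rfl, rfl⟩
    exact ⟨s(u,v), h, rfl⟩
  · rintro ⟨z, hz, hze⟩
    induction z using Sym2.ind with
    | _ u v =>
      simp only [Sym2.map_pair_eq, Sym2.eq_iff] at hze
      rcases hze with ⟨rfl, rfl⟩ | ⟨rfl, rfl⟩
      · exact ⟨u, v, hz, rfl, rfl⟩
      · exact ⟨v, u, hz.symm, rfl, rfl⟩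

-- card of supersets
lemma card_supersets (n m : ℕ) (E : Finset (Sym2 (Fin n))) (hE : ∀ s ∈ E, ¬ s.IsDiag)
    (hl : E.card ≤ m) :
    (Finset.univ.filter (fun G : Finset (Sym2 (Fin n)) =>
      (G.card = m ∧ ∀ s ∈ G, ¬ s.IsDiag) ∧ E ⊆ G)).card
    = (n.choose 2 - E.card).choose (m - E.card) := by
  classical
  set ND : Finset (Sym2 (Fin n)) := Finset.univ.filter (fun s => ¬ s.IsDiag) with hND
  have hNDcard : ND.card = n.choose 2 := by
    rw [hND]
    rw [← Fintype.card_subtype]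
    simpa using (Sym2.card_subtype_not_diag (α := Fin n))
  have hEND : E ⊆ ND := fun s hs => by simp [hND, hE s hs]
  have hsd : (ND \ E).card = n.choose 2 - E.card := by
    rw [Finset.card_sdiff_of_subset hEND, hNDcard]
  rw [← hsd, ← Finset.card_powersetCard (m - E.card) (ND \ E)]
  apply Finset.card_bij' (fun G _ => G \ E) (fun D _ => D ∪ E)
  · intro G hG
    simp only [Finset.mem_filter, Finset.mem_univ, true_and] at hG
    obtain ⟨⟨hc, hnd⟩, hsub⟩ := hG
    rw [Finset.mem_powersetCard]
    constructor
    · intro s hs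
      rw [Finset.mem_sdiff] at hs ⊢
      refine ⟨?_, hs.2⟩
      rw [hND, Finset.mem_filter]
      exact ⟨Finset.mem_univ _, hnd s hs.1⟩
    · rw [Finset.card_sdiff_of_subset hsub, hc]
  · intro D hD
    rw [Finset.mem_powersetCard] at hD
    obtain ⟨hsub, hc⟩ := hD
    simp only [Finset.mem_filter, Finset.mem_univ, true_and]
    have hdisj : Disjoint D E := Finset.disjoint_left.mpr (fun a ha => by
      have := hsub ha; rw [Finset.mem_sdiff] at this; exact this.2)
    refine ⟨⟨?_, ?_⟩, Finset.subset_union_right⟩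
    · rw [Finset.card_union_of_disjoint hdisj, hc]
      omega
    · intro s hs
      rcases Finset.mem_union.mp hs with h | h
      · have := hsub h; rw [Finset.mem_sdiff] at this
        have := this.1; rw [hND, Finset.mem_filter] at this; exact this.2
      · exact hE s h
  · intro G hG
    simp only [Finset.mem_filter, Finset.mem_univ, true_and] at hG
    exact Finset.sdiff_union_of_subset hG.2
  · intro D hD
    rw [Finset.mem_powersetCard] at hD
    have hdisj : Disjoint D E := Finset.disjoint_left.mpr (fun a ha => by
      have := hD.1 ha; rw [Finset.mem_sdiff] at this; exact this.2)
    rw [Finset.union_sdiff_right, Finset.sdiff_eq_self_of_disjoint hdisj]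


-- k is pinned by a copy
lemma copy_card {k n : ℕ} {H : SimpleGraph (Fin k)} {S : Finset (Fin n)}
    {E : Finset (Sym2 (Fin n))} (h : IsCopyOf H S E) : S.card = k := by
  obtain ⟨φ, hinj, hS, -⟩ := h
  rw [← hS, Finset.card_image_of_injective _ hinj, Finset.card_univ, Fintype.card_fin]

lemma copy_nondiag {k n : ℕ} {H : SimpleGraph (Fin k)} {S : Finset (Fin n)}
    {E : Finset (Sym2 (Fin n))} (h : IsCopyOf H S E) : ∀ s ∈ E, ¬ s.IsDiag := by
  obtain ⟨φ, hinj, -, hE⟩ := h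
  intro s hs
  have : s ∈ Sym2.map φ '' H.edgeSet := by rw [hE]; exact_mod_cast hs
  obtain ⟨z, hz, rfl⟩ := this
  rw [Sym2.isDiag_map hinj]
  exact (SimpleGraph.not_isDiag_of_mem_edgeSet _ hz)

lemma copy_card_edges {k n : ℕ} {H : SimpleGraph (Fin k)} {S : Finset (Fin n)}
    {E : Finset (Sym2 (Fin n))} (h : IsCopyOf H S E) : E.card = H.edgeSet.ncard := by
  obtain ⟨φ, hinj, -, hE⟩ := h
  have : (E : Set (Sym2 (Fin n))).ncard = H.edgeSet.ncard := by
    rw [← hE, Set.ncard_image_of_injective _ (Sym2.map.injective hinj)]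
  rwa [Set.ncard_coe_finset] at this

lemma natCard_eq_filter {α : Type*} [Fintype α] (p : α → Prop) :
    Nat.card {x // p x} = (Finset.univ.filter p).card := by
  rw [Nat.card_eq_fintype_card, Fintype.card_subtype]

-- Lemma B
lemma card_copies (𝓕 : (k : ℕ) → Set (SimpleGraph (Fin k)))
    (hiso : ∀ k, ∀ G G' : SimpleGraph (Fin k), Nonempty (G ≃g G') →
      (G ∈ 𝓕 k ↔ G' ∈ 𝓕 k))
    {n : ℕ} (S : Finset (Fin n)) (l : ℕ) :
    (Finset.univ.filter (fun E : Finset (Sym2 (Fin n)) =>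
      (∃ (k : ℕ) (H : SimpleGraph (Fin k)), H ∈ 𝓕 k ∧ IsCopyOf H S E) ∧ E.card = l)).card
    = famCount 𝓕 S.card l := by
  classical
  set k := S.card with hk
  let e : Fin k ≃ S := S.equivFin.symm
  let ι : Fin k → Fin n := fun i => (e i : Fin n)
  have hιinj : Function.Injective ι := fun a b h => e.injective (Subtype.ext h)
  have hιS : Finset.image ι Finset.univ = S := by
    ext x
    simp only [Finset.mem_image, Finset.mem_univ, true_and]
    constructor
    · rintro ⟨i, rfl⟩; exact (e i).2
    · intro hx; exact ⟨e.symm ⟨x, hx⟩, by simp [ι]⟩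
  rw [famCount, natCard_eq_filter]
  symm
  apply Finset.card_bij (fun H _ => H.edgeFinset.image (Sym2.map ι))
  · -- maps into
    intro H hH
    simp only [Finset.mem_filter, Finset.mem_univ, true_and] at hH ⊢
    have hcopy : IsCopyOf H S (H.edgeFinset.image (Sym2.map ι)) := by
      refine ⟨ι, hιinj, hιS, ?_⟩
      rw [Finset.coe_image, SimpleGraph.coe_edgeFinset]
    refine ⟨⟨k, H, hH.1, hcopy⟩, ?_⟩
    rw [Finset.card_image_of_injective _ (Sym2.map.injective hιinj),
      ← hH.2, SimpleGraph.edgeFinset_card, Set.ncard_eq_toFinset_card']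
    exact (Set.toFinset_card _).symm
  · -- injective
    intro H₁ h₁ H₂ h₂ heq
    have := Finset.image_injective (f := Sym2.map ι) (Sym2.map.injective hιinj) heq
    have h2 : H₁.edgeSet = H₂.edgeSet := by
      rw [← SimpleGraph.coe_edgeFinset, ← SimpleGraph.coe_edgeFinset, this]
    exact SimpleGraph.edgeSet_injective h2
  · -- surjective
    intro E hE
    simp only [Finset.mem_filter, Finset.mem_univ, true_and] at hE
    obtain ⟨⟨k', H', hH', hcopy⟩, hcard⟩ := hE
    obtain rfl : k' = k := by rw [← copy_card hcopy]
    obtain ⟨φ, hφinj, hφS, hφE⟩ := hcopy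
    have hmem : ∀ i, φ i ∈ S := fun i => by
      rw [← hφS]; exact Finset.mem_image_of_mem φ (Finset.mem_univ i)
    let ψ : Fin k → Fin k := fun i => e.symm ⟨φ i, hmem i⟩
    have hψinj : Function.Injective ψ := fun a b h => by
      apply hφinj
      have := e.symm.injective h
      exact congrArg Subtype.val this
    let σ : Fin k ≃ Fin k := Equiv.ofBijective ψ
      ⟨hψinj, Finite.surjective_of_injective hψinj⟩
    have hcomp : ∀ i, ι (σ i) = φ i := fun i => by
      show (e (e.symm ⟨φ i, hmem i⟩) : Fin n) = φ i
      rw [Equiv.apply_symm_apply]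
    refine ⟨H'.map σ.toEmbedding, ?_, ?_⟩
    · simp only [Finset.mem_filter, Finset.mem_univ, true_and]
      constructor
      · exact (hiso k _ _ ⟨(SimpleGraph.Iso.map σ H').symm⟩).mpr hH'
      · rw [edgeSet_map']
        simp only [Equiv.coe_toEmbedding]
        rw [Set.ncard_image_of_injective _ (Sym2.map.injective σ.injective)]
        have : (E : Set (Sym2 (Fin n))).ncard = H'.edgeSet.ncard := by
          rw [← hφE, Set.ncard_image_of_injective _ (Sym2.map.injective hφinj)]
        rw [← this, Set.ncard_coe_finset, hcard]
    · apply Finset.coe_injective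
      rw [Finset.coe_image, SimpleGraph.coe_edgeFinset, edgeSet_map', ← Set.image_comp,
        ← hφE]
      have hfun : Sym2.map ι ∘ Sym2.map ⇑σ.toEmbedding = Sym2.map φ := by
        funext z
        rw [Function.comp_apply]
        simp only [Equiv.coe_toEmbedding]
        rw [Sym2.map_map]
        exact congrArg (fun f => Sym2.map f z) (funext hcomp)
      rw [hfun]


lemma famCount_eq_zero (𝓕 : (k : ℕ) → Set (SimpleGraph (Fin k))) {k l : ℕ}
    (h : k.choose 2 < l) : famCount 𝓕 k l = 0 := by
  rw [famCount]
  have : IsEmpty {G : SimpleGraph (Fin k) // G ∈ 𝓕 k ∧ G.edgeSet.ncard = l} := by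
    refine ⟨fun ⟨G, _, hG⟩ => ?_⟩
    have hle : G.edgeSet.ncard ≤ k.choose 2 := by
      rw [Set.ncard_eq_toFinset_card']
      calc G.edgeSet.toFinset.card ≤ (Finset.univ.filter
          (fun s : Sym2 (Fin k) => ¬ s.IsDiag)).card := by
            apply Finset.card_le_card
            intro s hs
            rw [Set.mem_toFinset] at hs
            simp only [Finset.mem_filter, Finset.mem_univ, true_and]
            exact SimpleGraph.not_isDiag_of_mem_edgeSet _ hs
        _ = k.choose 2 := by
            rw [← Fintype.card_subtype]
            simpa using (Sym2.card_subtype_not_diag (α := Fin k))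
    omega
  simp [Nat.card_of_isEmpty]

lemma coeff_gpow_eq_zero {l j : ℕ} (h : j < l) :
    PowerSeries.coeff (R := ℚ) j ((X * (1 + X)⁻¹ : PowerSeries ℚ) ^ l) = 0 := by
  rw [mul_pow, coeff_X_pow_mul']
  simp [Nat.not_le.mpr h]

lemma one_add_X_pow_coeff (N j : ℕ) :
    PowerSeries.coeff (R := ℚ) j ((1 + X) ^ N) = (N.choose j : ℚ) := by
  have : ((1 + X : ℚ⟦X⟧)) = ((1 + Polynomial.X : Polynomial ℚ) : ℚ⟦X⟧) := by
    push_cast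
    rfl
  rw [this, ← Polynomial.coe_pow, Polynomial.coeff_coe, Polynomial.coeff_one_add_X_pow]

lemma gpow_mul_pow {l c : ℕ} (hl : l ≤ c) :
    (X * (1 + X)⁻¹ : PowerSeries ℚ) ^ l * (1 + X) ^ c
      = X ^ l * (1 + X) ^ (c - l) := by
  have h1 : ((1 + X : ℚ⟦X⟧)) * (1 + X)⁻¹ = 1 :=
    PowerSeries.mul_inv_cancel _ (by simp)
  have hu : ((1 + X)⁻¹ : ℚ⟦X⟧) ^ l * (1 + X) ^ l = 1 := by
    rw [← mul_pow, mul_comm, h1, one_pow]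
  have hsplit : (1 + X : ℚ⟦X⟧) ^ c = (1 + X) ^ l * (1 + X) ^ (c - l) := by
    rw [← pow_add, Nat.add_sub_cancel' hl]
  calc (X * (1 + X)⁻¹ : PowerSeries ℚ) ^ l * (1 + X) ^ c
      = X ^ l * (((1 + X)⁻¹ ^ l * (1 + X) ^ l) * (1 + X) ^ (c - l)) := by
        rw [mul_pow, hsplit]; ring
    _ = X ^ l * (1 + X) ^ (c - l) := by rw [hu, one_mul]

-- key coefficient lemma
lemma coeffA_mul (𝓕 : (k : ℕ) → Set (SimpleGraph (Fin k))) (k m c : ℕ)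
    (hzero : ∀ l, c < l → famCount 𝓕 k l = 0) :
    PowerSeries.coeff (R := ℚ) m ((PowerSeries.coeff (R := PowerSeries ℚ) k (famEGFsub 𝓕)) * (1 + X) ^ c)
      = ∑ l ∈ Finset.range (m + 1),
          ((famCount 𝓕 k l : ℚ) / Nat.factorial k) * ((c - l).choose (m - l) : ℚ) := by
  classical
  set g : ℚ⟦X⟧ := X * (1 + X)⁻¹ with hg
  set cl : ℕ → ℚ := fun l => (famCount 𝓕 k l : ℚ) / Nat.factorial k with hcl
  set B : ℚ⟦X⟧ := ∑ l ∈ Finset.range (m + 1), PowerSeries.C (R := ℚ) (cl l) * g ^ l with hB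
  have hcoeffA : ∀ j, j ≤ m → PowerSeries.coeff (R := ℚ) j
      (PowerSeries.coeff (R := PowerSeries ℚ) k (famEGFsub 𝓕)) = PowerSeries.coeff (R := ℚ) j B := by
    intro j hj
    rw [famEGFsub, coeff_mk, coeff_mk, hB, map_sum]
    simp only [coeff_C_mul]
    apply Finset.sum_subset
    · intro l hl
      rw [Finset.mem_range] at hl ⊢
      omega
    · intro l _ hl
      rw [Finset.mem_range, not_lt] at hl
      rw [coeff_gpow_eq_zero (by omega), mul_zero]
  have hmul : PowerSeries.coeff (R := ℚ) m
      ((PowerSeries.coeff (R := PowerSeries ℚ) k (famEGFsub 𝓕)) * (1 + X) ^ c)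
      = PowerSeries.coeff (R := ℚ) m (B * (1 + X) ^ c) := by
    rw [coeff_mul, coeff_mul]
    apply Finset.sum_congr rfl
    intro p hp
    rw [Finset.HasAntidiagonal.mem_antidiagonal] at hp
    rw [hcoeffA p.1 (by omega)]
  rw [hmul, hB, Finset.sum_mul, map_sum]
  apply Finset.sum_congr rfl
  intro l hl
  rw [Finset.mem_range] at hl
  rw [mul_assoc, coeff_C_mul]
  by_cases hc : l ≤ c
  · rw [gpow_mul_pow hc, coeff_X_pow_mul', if_pos (by omega : l ≤ m),
      one_add_X_pow_coeff]
  · have h0 : famCount 𝓕 k l = 0 := hzero l (by omega)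
    simp [hcl, h0]

lemma rhs_eval (𝓕 : (k : ℕ) → Set (SimpleGraph (Fin k))) (n m : ℕ) :
    (Nat.factorial n : ℚ) *
        PowerSeries.coeff (R := ℚ) m (PowerSeries.coeff (R := PowerSeries ℚ) n
          (famEGFsub 𝓕 * PowerSeries.exp (PowerSeries ℚ) *
            PowerSeries.C (R := PowerSeries ℚ) ((1 + X) ^ Nat.choose n 2)))
      = ∑ k ∈ Finset.range (n + 1), ∑ l ∈ Finset.range (m + 1),
          (Nat.choose n k : ℚ) * (famCount 𝓕 k l : ℚ) *
            ((Nat.choose n 2 - l).choose (m - l) : ℚ) := by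
  classical
  set c := Nat.choose n 2 with hc
  rw [PowerSeries.coeff_mul_C]
  have hconv : (PowerSeries.coeff (R := PowerSeries ℚ) n) (famEGFsub 𝓕 * PowerSeries.exp (PowerSeries ℚ))
      = ∑ k ∈ Finset.range (n + 1), (PowerSeries.coeff (R := PowerSeries ℚ) k (famEGFsub 𝓕)) *
          (PowerSeries.coeff (R := PowerSeries ℚ) (n - k) (PowerSeries.exp (PowerSeries ℚ))) := by
    rw [PowerSeries.coeff_mul, Finset.Nat.sum_antidiagonal_eq_sum_range_succ_mk]
  rw [hconv, Finset.sum_mul, map_sum, Finset.mul_sum]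
  apply Finset.sum_congr rfl
  intro k hk
  rw [Finset.mem_range] at hk
  have hexp : (PowerSeries.coeff (R := PowerSeries ℚ) (n - k)) (PowerSeries.exp (PowerSeries ℚ))
      = PowerSeries.C (R := ℚ) ((1 : ℚ) / (n - k).factorial) := by
    rw [PowerSeries.coeff_exp]
    rfl
  rw [hexp]
  have hcomm : (PowerSeries.coeff (R := PowerSeries ℚ) k (famEGFsub 𝓕)) *
      PowerSeries.C (R := ℚ) ((1 : ℚ) / (n - k).factorial) * (1 + X) ^ c
      = PowerSeries.C (R := ℚ) ((1 : ℚ) / (n - k).factorial) *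
        ((PowerSeries.coeff (R := PowerSeries ℚ) k (famEGFsub 𝓕)) * (1 + X) ^ c) := by
    ring
  rw [hcomm, coeff_C_mul]
  have hzero : ∀ l, c < l → famCount 𝓕 k l = 0 := by
    intro l hl
    apply famCount_eq_zero
    have : k.choose 2 ≤ n.choose 2 := Nat.choose_le_choose 2 (by omega)
    omega
  rw [coeffA_mul 𝓕 k m c hzero, Finset.mul_sum, Finset.mul_sum]
  apply Finset.sum_congr rfl
  intro l _
  have hch : (n.choose k : ℚ) = (n.factorial : ℚ) /
      ((k.factorial : ℚ) * ((n - k).factorial : ℚ)) := by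
    rw [Nat.cast_choose ℚ (by omega : k ≤ n)]
  rw [hch]
  have h1 : (k.factorial : ℚ) ≠ 0 := Nat.cast_ne_zero.mpr k.factorial_ne_zero
  have h2 : ((n - k).factorial : ℚ) ≠ 0 := Nat.cast_ne_zero.mpr (n - k).factorial_ne_zero
  field_simp


set_option maxHeartbeats 2000000 in
lemma lhs_count (𝓕 : (k : ℕ) → Set (SimpleGraph (Fin k)))
    (hiso : ∀ k, ∀ G G' : SimpleGraph (Fin k), Nonempty (G ≃g G') →
      (G ∈ 𝓕 k ↔ G' ∈ 𝓕 k))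
    (n m : ℕ) :
    Nat.card {p : Finset (Sym2 (Fin n)) × Finset (Fin n) × Finset (Sym2 (Fin n)) //
        IsGraph p.1 m ∧ p.2.2 ⊆ p.1 ∧
        ∃ (k : ℕ) (H : SimpleGraph (Fin k)), H ∈ 𝓕 k ∧ IsCopyOf H p.2.1 p.2.2}
      = ∑ k ∈ Finset.range (n + 1), ∑ l ∈ Finset.range (m + 1),
          n.choose k * (famCount 𝓕 k l * ((n.choose 2 - l).choose (m - l))) := by
  classical
  set Fam : Finset (Fin n) × Finset (Sym2 (Fin n)) → Prop :=
    fun q => ∃ (k : ℕ) (H : SimpleGraph (Fin k)), H ∈ 𝓕 k ∧ IsCopyOf H q.1 q.2 with hFam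
  set P : Finset (Sym2 (Fin n)) × Finset (Fin n) × Finset (Sym2 (Fin n)) → Prop :=
    fun p => IsGraph p.1 m ∧ p.2.2 ⊆ p.1 ∧ Fam p.2 with hP
  rw [natCard_eq_filter P]
  rw [Finset.card_eq_sum_card_fiberwise
    (f := Prod.snd) (t := Finset.univ) (fun x _ => Finset.mem_univ _)]
  have step1 : ∀ q : Finset (Fin n) × Finset (Sym2 (Fin n)),
      ((@Finset.filter _ P (fun a => Classical.propDecidable (P a)) Finset.univ).filter
        (fun p => p.2 = q)).card
        = (Finset.univ.filter (fun G => P (G, q))).card := by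
    intro q
    refine Finset.card_bij' (fun p _ => p.1) (fun G _ => (G, q)) ?_ ?_ ?_ ?_
    · intro p hp
      have hp' := Finset.mem_filter.mp hp
      have hp1 := ((@Finset.mem_filter _ P (fun a => Classical.propDecidable (P a)) _ _).mp
        hp'.1).2
      have hp2 := hp'.2
      refine Finset.mem_filter.mpr ⟨Finset.mem_univ _, ?_⟩
      show P (p.1, q)
      rw [← hp2]
      exact hp1
    · intro G hG
      have hG' := (Finset.mem_filter.mp hG).2
      exact Finset.mem_filter.mpr ⟨(@Finset.mem_filter _ P
        (fun a => Classical.propDecidable (P a)) _ _).mpr ⟨Finset.mem_univ _, hG'⟩, rfl⟩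
    · intro p hp
      exact Prod.ext rfl (Finset.mem_filter.mp hp).2.symm
    · intro G _
      rfl
  have step2 : ∀ q : Finset (Fin n) × Finset (Sym2 (Fin n)),
      (Finset.univ.filter (fun G => P (G, q))).card
        = if Fam q ∧ q.2.card ≤ m then (n.choose 2 - q.2.card).choose (m - q.2.card)
          else 0 := by
    intro q
    by_cases hF : Fam q
    · by_cases hcard : q.2.card ≤ m
      · rw [if_pos ⟨hF, hcard⟩]
        obtain ⟨k, H, -, hcopy⟩ := id hF
        have hnd := copy_nondiag hcopy
        rw [← card_supersets n m q.2 hnd hcard]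
        congr 1
        apply Finset.filter_congr
        intro G _
        simp only [hP, IsGraph]
        constructor
        · rintro ⟨h1, h2, -⟩
          exact ⟨h1, h2⟩
        · rintro ⟨h1, h2⟩
          exact ⟨h1, h2, hF⟩
      · rw [if_neg (fun h => hcard h.2)]
        rw [Finset.card_eq_zero, Finset.filter_eq_empty_iff]
        intro G _
        rintro ⟨⟨hGc, -⟩, hsub, -⟩
        exact hcard (hGc ▸ Finset.card_le_card hsub)
    · rw [if_neg (fun h => hF h.1)]
      rw [Finset.card_eq_zero, Finset.filter_eq_empty_iff]
      intro G _
      rintro ⟨-, -, h3⟩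
      exact hF h3
  have hmid : (∑ q : Finset (Fin n) × Finset (Sym2 (Fin n)),
      (Finset.filter (fun a => a.2 = q)
        (@Finset.filter _ P (fun a => Classical.propDecidable (P a)) Finset.univ)).card)
      = ∑ q : Finset (Fin n) × Finset (Sym2 (Fin n)),
        (if Fam q ∧ q.2.card ≤ m then (n.choose 2 - q.2.card).choose (m - q.2.card)
          else 0) :=
    Finset.sum_congr rfl (fun q _ => (step1 q).trans (step2 q))
  refine hmid.trans ?_
  rw [Fintype.sum_prod_type]
  have step4 : ∀ S : Finset (Fin n),
      (∑ E : Finset (Sym2 (Fin n)),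
        if Fam (S, E) ∧ E.card ≤ m then (n.choose 2 - E.card).choose (m - E.card) else 0)
      = ∑ l ∈ Finset.range (m + 1),
          famCount 𝓕 S.card l * ((n.choose 2 - l).choose (m - l)) := by
    intro S
    rw [← Finset.sum_filter]
    rw [← Finset.sum_fiberwise_of_maps_to (g := Finset.card) (t := Finset.range (m + 1))
      (fun E hE => by
        simp only [Finset.mem_filter] at hE
        rw [Finset.mem_range]
        omega)]
    apply Finset.sum_congr rfl
    intro l hl
    rw [Finset.mem_range] at hl
    rw [Finset.filter_filter]
    have hset : (Finset.univ.filter (fun E : Finset (Sym2 (Fin n)) =>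
        (Fam (S, E) ∧ E.card ≤ m) ∧ E.card = l))
        = (Finset.univ.filter (fun E : Finset (Sym2 (Fin n)) =>
          (∃ (k : ℕ) (H : SimpleGraph (Fin k)), H ∈ 𝓕 k ∧ IsCopyOf H S E) ∧ E.card = l)) := by
      apply Finset.filter_congr
      intro E _
      simp only [hFam]
      constructor
      · rintro ⟨⟨h1, -⟩, h3⟩
        exact ⟨h1, h3⟩
      · rintro ⟨h1, h3⟩
        exact ⟨⟨h1, by omega⟩, h3⟩
    rw [hset]
    rw [Finset.sum_const_nat (m := (n.choose 2 - l).choose (m - l)) (fun E hE => by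
      have h := (Finset.mem_filter.mp hE).2.2
      rw [h])]
    rw [card_copies 𝓕 hiso S l]
  simp_rw [step4]
  rw [← Finset.sum_fiberwise_of_maps_to (g := Finset.card) (t := Finset.range (n + 1))
    (fun S _ => by
      rw [Finset.mem_range]
      have := Finset.card_le_univ S
      simp only [Finset.card_univ, Fintype.card_fin] at this
      omega)]
  apply Finset.sum_congr rfl
  intro k hk
  have hcf : (Finset.univ.filter (fun S : Finset (Fin n) => S.card = k)).card
      = n.choose k := by
    rw [← Fintype.card_subtype]
    simpa using (Fintype.card_finset_len (α := Fin n) k)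
  rw [Finset.sum_const_nat (m := ∑ l ∈ Finset.range (m + 1),
      famCount 𝓕 k l * ((n.choose 2 - l).choose (m - l))) (fun S hS => by
    have h := (Finset.mem_filter.mp hS).2
    rw [h])]
  rw [hcf, Finset.mul_sum]


/-- for any graph family `𝓕` closed under isomorphism, the number of
`(n,m)`-graphs with one distinguished `𝓕`-subgraph equals
`n!·[z^n w^m] F(z, w/(1+w)) e^z (1+w)^{C(n,2)}`, where
`F(z,w) = ∑ 𝓕_{k,ℓ} w^ℓ z^k/k!`. -/
theorem stmt_18 (𝓕 : (k : ℕ) → Set (SimpleGraph (Fin k)))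
    (hiso : ∀ k, ∀ G G' : SimpleGraph (Fin k), Nonempty (G ≃g G') →
      (G ∈ 𝓕 k ↔ G' ∈ 𝓕 k))
    (n m : ℕ) :
    (Nat.card {p : Finset (Sym2 (Fin n)) × Finset (Fin n) × Finset (Sym2 (Fin n)) //
        IsGraph p.1 m ∧ p.2.2 ⊆ p.1 ∧
        ∃ (k : ℕ) (H : SimpleGraph (Fin k)), H ∈ 𝓕 k ∧ IsCopyOf H p.2.1 p.2.2} : ℚ)
      = (Nat.factorial n : ℚ) *
          PowerSeries.coeff (R := ℚ) m (PowerSeries.coeff (R := PowerSeries ℚ) n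
            (famEGFsub 𝓕 * PowerSeries.exp (PowerSeries ℚ) *
              PowerSeries.C (R := PowerSeries ℚ) ((1 + X) ^ Nat.choose n 2))) := by
  rw [rhs_eval 𝓕 n m, lhs_count 𝓕 hiso n m]
  push_cast
  apply Finset.sum_congr rfl
  intro k _
  apply Finset.sum_congr rfl
  intro l _
  ring
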